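/- Let Y_1, …, Y_m be real random variables on a common probability space, not necessarily independent, such that each Y_i is centered Gaussian, and let R := Σ_{i ∈ [m]} |Y_i|. Then P[ R ≥ E[R]/2 ] ≥ 1/12. -/

import Mathlib

open MeasureTheory ProbabilityTheory

open Real Set
open scoped NNReal ENNReal

lemma aux1 {v : ℝ} (hv : 0 < v) :
    ∫ x in Ioi (0:ℝ), x * rexp (-(2*v)⁻¹ * x^2) = v := by
  have h := integral_rpow_mul_exp_neg_mul_rpow (p := 2) (q := 1) (b := (2*v)⁻¹)
    two_pos (by norm_num) (by positivity)
  rw [show ∫ x in Ioi (0:ℝ), x ^ (1:ℝ) * rexp (-(2*v)⁻¹ * x ^ (2:ℝ))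
      = ∫ x in Ioi (0:ℝ), x * rexp (-(2*v)⁻¹ * x^2) by
    refine setIntegral_congr_fun measurableSet_Ioi (fun x hx => ?_)
    rw [rpow_one, ← Real.rpow_natCast x 2]; norm_num] at h
  rw [h, show (-(1+1)/2 : ℝ) = -1 by norm_num, Real.rpow_neg_one, inv_inv,
    show ((1+1)/2 : ℝ) = 1 by norm_num, Real.Gamma_one]
  ring

lemma aux2 {v : ℝ} (hv : 0 < v) :
    ∫ x in Ioi (0:ℝ), x^2 * rexp (-(2*v)⁻¹ * x^2) = v * Real.sqrt (2*π*v) / 2 := by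
  have h := integral_rpow_mul_exp_neg_mul_rpow (p := 2) (q := 2) (b := (2*v)⁻¹)
    two_pos (by norm_num) (by positivity)
  rw [show ∫ x in Ioi (0:ℝ), x ^ (2:ℝ) * rexp (-(2*v)⁻¹ * x ^ (2:ℝ))
      = ∫ x in Ioi (0:ℝ), x^2 * rexp (-(2*v)⁻¹ * x^2) by
    refine setIntegral_congr_fun measurableSet_Ioi (fun x hx => ?_)
    rw [← Real.rpow_natCast x 2]; norm_num] at h
  rw [h, show (-(2+1)/2 : ℝ) = -(3/2) by norm_num,
    show ((2+1)/2 : ℝ) = 1/2 + 1 by norm_num, Real.Gamma_add_one (by norm_num),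
    Real.Gamma_one_half_eq, Real.rpow_neg (by positivity),
    Real.inv_rpow (by positivity), inv_inv,
    show (3/2:ℝ) = 1 + 1/2 by norm_num, Real.rpow_add (by positivity), Real.rpow_one,
    ← Real.sqrt_eq_rpow, show (2*π*v) = (2*v)*π by ring, Real.sqrt_mul (by positivity)]
  ring_nf
  rw [show v*π*2 = v*(π*2) by ring, Real.sqrt_mul hv.le, Real.sqrt_mul pi_pos.le]
  ring

lemma integrable_dirac' {f : ℝ → ℝ} (hf : Measurable f) (a : ℝ) :
    Integrable f (Measure.dirac a) := by
  refine ⟨hf.aestronglyMeasurable, ?_⟩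
  rw [HasFiniteIntegral, lintegral_dirac' _ hf.enorm]
  exact enorm_lt_top

lemma gauss_pdf_mul_eq {v : ℝ≥0} (hv : v ≠ 0) (g : ℝ → ℝ) :
    ∫ x, g x ∂(gaussianReal 0 v) = ∫ x, gaussianPDFReal 0 v x * g x := by
  rw [gaussianReal_of_var_ne_zero _ hv, gaussianPDF_def]
  have h : (fun x => ENNReal.ofReal (gaussianPDFReal 0 v x))
      = fun x => ((Real.toNNReal (gaussianPDFReal 0 v x) : ℝ≥0) : ℝ≥0∞) := rfl
  rw [h, integral_withDensity_eq_integral_smul₀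
    ((measurable_gaussianPDFReal 0 v).real_toNNReal.aemeasurable)]
  refine integral_congr_ae (Filter.Eventually.of_forall fun x => ?_)
  simp [NNReal.smul_def, Real.coe_toNNReal _ (gaussianPDFReal_nonneg 0 v x)]

lemma gauss_integrable_iff {v : ℝ≥0} (hv : v ≠ 0) (g : ℝ → ℝ) (hg : Measurable g) :
    Integrable g (gaussianReal 0 v) ↔
      Integrable (fun x => gaussianPDFReal 0 v x * g x) volume := by
  rw [gaussianReal_of_var_ne_zero _ hv, gaussianPDF_def]
  have h : (fun x => ENNReal.ofReal (gaussianPDFReal 0 v x))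
      = fun x => ((Real.toNNReal (gaussianPDFReal 0 v x) : ℝ≥0) : ℝ≥0∞) := rfl
  rw [h, integrable_withDensity_iff_integrable_smul₀
    ((measurable_gaussianPDFReal 0 v).real_toNNReal.aemeasurable)]
  refine integrable_congr (Filter.Eventually.of_forall fun x => ?_)
  simp [NNReal.smul_def, Real.coe_toNNReal _ (gaussianPDFReal_nonneg 0 v x)]

lemma gauss_pdf_eq {v : ℝ≥0} (x : ℝ) :
    gaussianPDFReal 0 v x = (√(2 * π * v))⁻¹ * rexp (-(2*(v:ℝ))⁻¹ * x^2) := by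
  rw [gaussianPDFReal, sub_zero]
  congr 1
  rw [div_eq_inv_mul, neg_mul, mul_neg]

lemma gauss_integral_abs (v : ℝ≥0) :
    ∫ x, |x| ∂(gaussianReal 0 v) = Real.sqrt (2 * v / π) := by
  by_cases hv : v = 0
  · simp [hv, integral_dirac]
  have hv' : 0 < (v:ℝ) := lt_of_le_of_ne v.coe_nonneg (by exact_mod_cast (Ne.symm hv))
  rw [gauss_pdf_mul_eq hv]
  have hfun : ∀ x : ℝ, gaussianPDFReal 0 v x * |x|
      = (fun y => (√(2 * π * v))⁻¹ * (y * rexp (-(2*(v:ℝ))⁻¹ * y^2))) |x| := by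
    intro x
    simp only [gauss_pdf_eq, sq_abs]
    ring
  have key : (∫ x, gaussianPDFReal 0 v x * |x|)
      = 2 * ∫ y in Ioi (0:ℝ), (√(2 * π * v))⁻¹ * (y * rexp (-(2*(v:ℝ))⁻¹ * y^2)) := by
    rw [← integral_comp_abs (f := fun y => (√(2 * π * (v:ℝ)))⁻¹ * (y * rexp (-(2*(v:ℝ))⁻¹ * y^2)))]
    exact integral_congr_ae (Filter.Eventually.of_forall hfun)
  rw [key, integral_const_mul, aux1 hv']
  have hπv : (0:ℝ) < √(2*π*v) := Real.sqrt_pos.mpr (by positivity)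
  have e1 : √(2*(v:ℝ)/π) * √(2*π*(v:ℝ)) = 2*v := by
    rw [← Real.sqrt_mul (by positivity)]
    rw [show 2*(v:ℝ)/π * (2*π*v) = (2*v)^2 by field_simp]
    exact Real.sqrt_sq (by positivity)
  have e2 : √(2*(v:ℝ)/π) = 2*v / √(2*π*(v:ℝ)) := by
    rw [eq_div_iff hπv.ne']; exact e1
  rw [e2]
  field_simp

lemma gauss_integral_sq (v : ℝ≥0) :
    ∫ x, x^2 ∂(gaussianReal 0 v) = v := by
  by_cases hv : v = 0
  · simp [hv, integral_dirac]
  have hv' : 0 < (v:ℝ) := lt_of_le_of_ne v.coe_nonneg (by exact_mod_cast (Ne.symm hv))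
  rw [gauss_pdf_mul_eq hv]
  have hfun : ∀ x : ℝ, gaussianPDFReal 0 v x * x^2
      = (fun y => (√(2 * π * v))⁻¹ * (y^2 * rexp (-(2*(v:ℝ))⁻¹ * y^2))) |x| := by
    intro x
    simp only [gauss_pdf_eq, sq_abs]
    ring
  have key : (∫ x, gaussianPDFReal 0 v x * x^2)
      = 2 * ∫ y in Ioi (0:ℝ), (√(2 * π * v))⁻¹ * (y^2 * rexp (-(2*(v:ℝ))⁻¹ * y^2)) := by
    rw [← integral_comp_abs (f := fun y => (√(2 * π * (v:ℝ)))⁻¹ * (y^2 * rexp (-(2*(v:ℝ))⁻¹ * y^2)))]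
    exact integral_congr_ae (Filter.Eventually.of_forall hfun)
  rw [key, integral_const_mul, aux2 hv']
  have h : √(2 * π * (v:ℝ)) ≠ 0 := by positivity
  field_simp

lemma gauss_integrable_abs (v : ℝ≥0) :
    Integrable (fun x : ℝ => |x|) (gaussianReal 0 v) := by
  by_cases hv : v = 0
  · rw [hv, gaussianReal_zero_var]
    exact integrable_dirac' (measurable_abs) 0
  have hv' : 0 < (v:ℝ) := lt_of_le_of_ne v.coe_nonneg (by exact_mod_cast (Ne.symm hv))
  rw [gauss_integrable_iff hv _ measurable_abs]
  have hb : 0 < (2*(v:ℝ))⁻¹ := by positivity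
  have h := ((integrable_mul_exp_neg_mul_sq hb).abs.const_mul (√(2 * π * v))⁻¹)
  refine h.congr (Filter.Eventually.of_forall fun x => ?_)
  simp only [gauss_pdf_eq, abs_mul, abs_of_nonneg (Real.exp_nonneg _)]
  ring

lemma gauss_integrable_sq (v : ℝ≥0) :
    Integrable (fun x : ℝ => x^2) (gaussianReal 0 v) := by
  by_cases hv : v = 0
  · rw [hv, gaussianReal_zero_var]
    exact integrable_dirac' (by measurability) 0
  have hv' : 0 < (v:ℝ) := lt_of_le_of_ne v.coe_nonneg (by exact_mod_cast (Ne.symm hv))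
  rw [gauss_integrable_iff hv _ (by measurability)]
  have hb : 0 < (2*(v:ℝ))⁻¹ := by positivity
  have h := ((integrable_rpow_mul_exp_neg_mul_sq hb
    (by norm_num : (-1:ℝ) < 2)).const_mul (√(2 * π * v))⁻¹)
  refine h.congr (Filter.Eventually.of_forall fun x => ?_)
  have hx : x ^ (2:ℝ) = x^2 := by rw [← Real.rpow_natCast x 2]; norm_num
  simp only [gauss_pdf_eq, hx]
  ring

lemma my_cs {Ω : Type*} [MeasurableSpace Ω] (μ : Measure Ω)
    (f g : Ω → ℝ) (hf0 : ∀ ω, 0 ≤ f ω) (hg0 : ∀ ω, 0 ≤ g ω)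
    (hf2 : Integrable (fun ω => f ω ^ 2) μ) (hg2 : Integrable (fun ω => g ω ^ 2) μ)
    (hfg : Integrable (fun ω => f ω * g ω) μ) :
    ∫ ω, f ω * g ω ∂μ ≤ Real.sqrt (∫ ω, f ω ^ 2 ∂μ) * Real.sqrt (∫ ω, g ω ^ 2 ∂μ) := by
  set A := ∫ ω, f ω ^ 2 ∂μ with hA
  set B := ∫ ω, g ω ^ 2 ∂μ with hB
  set C := ∫ ω, f ω * g ω ∂μ with hC
  have hA0 : 0 ≤ A := integral_nonneg fun ω => sq_nonneg _
  have hB0 : 0 ≤ B := integral_nonneg fun ω => sq_nonneg _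
  have hC0 : 0 ≤ C := integral_nonneg fun ω => mul_nonneg (hf0 ω) (hg0 ω)
  have key : ∀ t : ℝ, 0 ≤ A - 2*t*C + t^2*B := by
    intro t
    have h1 : (fun ω => (f ω - t*g ω)^2)
        = fun ω => (f ω^2 - (2*t)*(f ω*g ω)) + t^2*(g ω^2) := by ext ω; ring
    have h2 : 0 ≤ ∫ ω, (f ω - t*g ω)^2 ∂μ := integral_nonneg fun ω => sq_nonneg _
    have hi1 : Integrable (fun ω => f ω^2 - (2*t)*(f ω*g ω)) μ := hf2.sub (hfg.const_mul _)
    have hi2 : Integrable (fun ω => t^2*(g ω^2)) μ := hg2.const_mul _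
    rw [h1, integral_add hi1 hi2, integral_sub hf2 (hfg.const_mul _),
      integral_const_mul, integral_const_mul] at h2
    linarith
  rcases eq_or_lt_of_le hB0 with hBz | hBpos
  · have hCz : C ≤ 0 := by
      by_contra hc
      push_neg at hc
      have h := key ((A+1)/(2*C))
      rw [← hBz, mul_zero, add_zero] at h
      have e : 2*((A+1)/(2*C))*C = A+1 := by field_simp
      rw [e] at h
      linarith
    exact le_trans hCz (mul_nonneg (Real.sqrt_nonneg _) (Real.sqrt_nonneg _))
  · have h := key (C/B)
    have e : A - 2*(C/B)*C + (C/B)^2*B = A - C^2/B := by field_simp; ring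
    rw [e] at h
    have hC2 : C^2 ≤ A*B := (div_le_iff₀ hBpos).mp (by linarith)
    calc C = Real.sqrt (C^2) := (Real.sqrt_sq hC0).symm
      _ ≤ Real.sqrt (A*B) := Real.sqrt_le_sqrt hC2
      _ = Real.sqrt A * Real.sqrt B := Real.sqrt_mul hA0 B

/-- For (not necessarily independent) centered Gaussian random variables `Y_1, …, Y_m`
and `R := Σ_i |Y_i|`, we have `P[R ≥ E[R]/2] ≥ 1/12`. -/
theorem gaussian_sum_abs_anticoncentration {Ω : Type*} [MeasurableSpace Ω]
    (μ : Measure Ω) [IsProbabilityMeasure μ]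
    (m : ℕ) (Y : Fin m → Ω → ℝ)
    (hmeas : ∀ i, Measurable (Y i))
    (hlaw : ∀ i, ∃ v : NNReal, μ.map (Y i) = gaussianReal 0 v) :
    (1 / 12 : ENNReal) ≤
      μ {ω | (∫ ω', (∑ i : Fin m, |Y i ω'|) ∂μ) / 2 ≤ ∑ i : Fin m, |Y i ω|} := by
  classical
  choose v hv using hlaw
  set R : Ω → ℝ := fun ω => ∑ i : Fin m, |Y i ω| with hRdef
  have hRmeas : Measurable R := Finset.measurable_sum _ fun i _ => (hmeas i).abs
  have hRpos : ∀ ω, 0 ≤ R ω := fun ω => Finset.sum_nonneg fun i _ => abs_nonneg _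
  set σ : Fin m → ℝ := fun i => Real.sqrt (v i) with hσdef
  have hσ0 : ∀ i, 0 ≤ σ i := fun i => Real.sqrt_nonneg _
  set S := ∑ i : Fin m, σ i with hSdef
  have hS0 : 0 ≤ S := Finset.sum_nonneg fun i _ => hσ0 i
  -- integrability and moments of each |Y i|
  have habs_int : ∀ i, Integrable (fun ω => |Y i ω|) μ := by
    intro i
    have h := gauss_integrable_abs (v i)
    rw [← hv i] at h
    exact (integrable_map_measure measurable_abs.aestronglyMeasurable
      (hmeas i).aemeasurable).mp h
  have hsq_int : ∀ i, Integrable (fun ω => (Y i ω)^2) μ := by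
    intro i
    have h := gauss_integrable_sq (v i)
    rw [← hv i] at h
    exact (integrable_map_measure
      ((measurable_id.pow_const 2).aestronglyMeasurable) (hmeas i).aemeasurable).mp h
  have habs : ∀ i, ∫ ω, |Y i ω| ∂μ = Real.sqrt (2*(v i)/π) := by
    intro i
    have h := integral_map (hmeas i).aemeasurable
      (measurable_abs.aestronglyMeasurable (μ := μ.map (Y i)))
    rw [hv i, gauss_integral_abs] at h
    exact h.symm
  have hsq : ∀ i, ∫ ω, (Y i ω)^2 ∂μ = σ i ^ 2 := by
    intro i
    have h := integral_map (μ := μ) (φ := Y i) (f := fun x : ℝ => x^2) (hmeas i).aemeasurable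
      ((measurable_id.pow_const 2).aestronglyMeasurable)
    rw [hv i, gauss_integral_sq] at h
    rw [← h, hσdef]
    simp [Real.sq_sqrt (v i).coe_nonneg]
  have hEint : Integrable R μ := integrable_finset_sum _ fun i _ => habs_int i
  have ha : ∫ ω, R ω ∂μ = Real.sqrt (2/π) * S := by
    rw [hRdef]
    rw [integral_finset_sum _ fun i _ => habs_int i, hSdef, Finset.mul_sum]
    refine Finset.sum_congr rfl fun i _ => ?_
    rw [habs i, hσdef, ← Real.sqrt_mul (by positivity)]
    congr 1
    field_simp
  set a := ∫ ω, R ω ∂μ with hadef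
  have ha0 : 0 ≤ a := integral_nonneg hRpos
  show (1 / 12 : ENNReal) ≤ μ {ω | a / 2 ≤ R ω}
  set Aev := {ω | a / 2 ≤ R ω} with hAev
  have hAmeas : MeasurableSet Aev := measurableSet_le measurable_const hRmeas
  by_cases hSz : S = 0
  · have haz : a = 0 := by rw [ha, hSz, mul_zero]
    have : Aev = Set.univ := by
      ext ω
      simp only [hAev, Set.mem_setOf_eq, Set.mem_univ, iff_true, haz]
      simpa using hRpos ω
    rw [this, measure_univ]
    exact le_trans (by norm_num : (1/12 : ENNReal) ≤ 1) le_rfl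
  have hSpos : 0 < S := lt_of_le_of_ne hS0 (Ne.symm hSz)
  -- second moment bound
  have hcross_int : ∀ i j : Fin m, Integrable (fun ω => |Y i ω| * |Y j ω|) μ := by
    intro i j
    have hdom : Integrable (fun ω => ((Y i ω)^2 + (Y j ω)^2)/2) μ :=
      ((hsq_int i).add (hsq_int j)).div_const 2
    refine hdom.mono' ((hmeas i).abs.mul (hmeas j).abs).aestronglyMeasurable
      (Filter.Eventually.of_forall fun ω => ?_)
    rw [Real.norm_eq_abs, abs_of_nonneg (mul_nonneg (abs_nonneg _) (abs_nonneg _))]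
    nlinarith [sq_nonneg (|Y i ω| - |Y j ω|), sq_abs (Y i ω), sq_abs (Y j ω)]
  have habs_sq : ∀ i, ∫ ω, |Y i ω|^2 ∂μ = σ i ^ 2 := by
    intro i
    rw [← hsq i]
    simp [sq_abs]
  have hcross : ∀ i j : Fin m, ∫ ω, |Y i ω| * |Y j ω| ∂μ ≤ σ i * σ j := by
    intro i j
    have h := my_cs μ (fun ω => |Y i ω|) (fun ω => |Y j ω|)
      (fun ω => abs_nonneg _) (fun ω => abs_nonneg _)
      (by simpa [sq_abs] using hsq_int i) (by simpa [sq_abs] using hsq_int j)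
      (hcross_int i j)
    rw [habs_sq i, habs_sq j, Real.sqrt_sq (hσ0 i), Real.sqrt_sq (hσ0 j)] at h
    exact h
  have hR2eq : ∀ ω, R ω^2 = ∑ i : Fin m, ∑ j : Fin m, |Y i ω| * |Y j ω| := by
    intro ω
    rw [hRdef, sq, Finset.sum_mul_sum]
  have hsum_int : Integrable (fun ω => ∑ i : Fin m, ∑ j : Fin m, |Y i ω| * |Y j ω|) μ :=
    integrable_finset_sum _ fun i _ => integrable_finset_sum _ fun j _ => hcross_int i j
  have hR2int : Integrable (fun ω => R ω^2) μ :=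
    hsum_int.congr (Filter.Eventually.of_forall fun ω => (hR2eq ω).symm)
  have hR2 : ∫ ω, R ω^2 ∂μ ≤ S^2 := by
    calc ∫ ω, R ω^2 ∂μ = ∑ i : Fin m, ∑ j : Fin m, ∫ ω, |Y i ω| * |Y j ω| ∂μ := by
          rw [integral_congr_ae (Filter.Eventually.of_forall hR2eq),
            integral_finset_sum _ fun i _ =>
              integrable_finset_sum _ fun j _ => hcross_int i j]
          exact Finset.sum_congr rfl fun i _ =>
            integral_finset_sum _ fun j _ => hcross_int i j
      _ ≤ ∑ i : Fin m, ∑ j : Fin m, σ i * σ j :=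
          Finset.sum_le_sum fun i _ => Finset.sum_le_sum fun j _ => hcross i j
      _ = S^2 := by rw [hSdef, sq, Finset.sum_mul_sum]
  set p := (μ Aev).toReal with hpdef
  have hp0 : 0 ≤ p := ENNReal.toReal_nonneg
  -- split
  have hsplit : a = (∫ ω in Aev, R ω ∂μ) + ∫ ω in Aevᶜ, R ω ∂μ :=
    (integral_add_compl hAmeas hEint).symm
  have hcompl : ∫ ω in Aevᶜ, R ω ∂μ ≤ a/2 := by
    calc ∫ ω in Aevᶜ, R ω ∂μ ≤ ∫ _ω in Aevᶜ, a/2 ∂μ := by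
          refine setIntegral_mono_on hEint.integrableOn
            (integrableOn_const (measure_ne_top μ _)) hAmeas.compl
            fun ω hω => ?_
          have : ¬ (a/2 ≤ R ω) := hω
          linarith [lt_of_not_ge this]
      _ = (μ Aevᶜ).toReal * (a/2) := by rw [setIntegral_const, smul_eq_mul]; rfl
      _ ≤ 1 * (a/2) := by
          refine mul_le_mul_of_nonneg_right ?_ (by linarith)
          have h1 : μ Aevᶜ ≤ 1 := prob_le_one
          calc (μ Aevᶜ).toReal ≤ (1 : ℝ≥0∞).toReal :=
                ENNReal.toReal_mono ENNReal.one_ne_top h1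
            _ = 1 := ENNReal.toReal_one
      _ = a/2 := one_mul _
  -- Cauchy-Schwarz on the event
  have hmain : ∫ ω in Aev, R ω ∂μ ≤ S * Real.sqrt p := by
    set g : Ω → ℝ := Aev.indicator fun _ => (1:ℝ) with hgdef
    have hg01 : ∀ ω, g ω ^ 2 = g ω := by
      intro ω
      by_cases h : ω ∈ Aev <;> simp [hgdef, Set.indicator_apply, h]
    have hg0 : ∀ ω, 0 ≤ g ω := by
      intro ω
      by_cases h : ω ∈ Aev <;> simp [hgdef, Set.indicator_apply, h]
    have hgint : Integrable g μ := (integrable_const (1:ℝ)).indicator hAmeas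
    have hg2int : Integrable (fun ω => g ω ^ 2) μ :=
      hgint.congr (Filter.Eventually.of_forall fun ω => (hg01 ω).symm)
    have hfg_eq : ∀ ω, R ω * g ω = Aev.indicator R ω := by
      intro ω
      by_cases h : ω ∈ Aev <;> simp [hgdef, Set.indicator_apply, h]
    have hfgint : Integrable (fun ω => R ω * g ω) μ :=
      (hEint.indicator hAmeas).congr (Filter.Eventually.of_forall fun ω => (hfg_eq ω).symm)
    have hcs := my_cs μ R g hRpos hg0 hR2int hg2int hfgint
    have e1 : ∫ ω, R ω * g ω ∂μ = ∫ ω in Aev, R ω ∂μ := by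
      rw [integral_congr_ae (Filter.Eventually.of_forall hfg_eq), integral_indicator hAmeas]
    have e2 : ∫ ω, g ω ^ 2 ∂μ = p := by
      rw [integral_congr_ae (Filter.Eventually.of_forall hg01), hgdef,
        integral_indicator_const (1:ℝ) hAmeas, smul_eq_mul, mul_one, hpdef]; rfl
    rw [e1, e2] at hcs
    calc ∫ ω in Aev, R ω ∂μ ≤ Real.sqrt (∫ ω, R ω ^2 ∂μ) * Real.sqrt p := hcs
      _ ≤ Real.sqrt (S^2) * Real.sqrt p :=
          mul_le_mul_of_nonneg_right (Real.sqrt_le_sqrt hR2) (Real.sqrt_nonneg _)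
      _ = S * Real.sqrt p := by rw [Real.sqrt_sq hS0]
  have hhalf : a / 2 ≤ S * Real.sqrt p := by linarith
  have hdiv : Real.sqrt (2/π) / 2 ≤ Real.sqrt p := by
    rw [ha] at hhalf
    have := mul_le_mul_of_nonneg_left hhalf (le_of_lt (inv_pos.mpr hSpos))
    rw [← mul_assoc, inv_mul_cancel₀ hSpos.ne', one_mul] at this
    calc Real.sqrt (2/π) / 2 = S⁻¹ * (Real.sqrt (2/π) * S / 2) := by
          field_simp
      _ ≤ Real.sqrt p := this
  have hp1 : 1/(2*π) ≤ p := by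
    have h1 : (Real.sqrt (2/π) / 2)^2 ≤ (Real.sqrt p)^2 :=
      pow_le_pow_left₀ (by positivity) hdiv 2
    rw [Real.sq_sqrt hp0, div_pow, Real.sq_sqrt (by positivity : (0:ℝ) ≤ 2/π)] at h1
    have hπ := Real.pi_pos
    calc 1/(2*π) = (2/π)/2^2 := by field_simp
      _ ≤ p := h1
  have h12 : (1:ℝ)/12 ≤ p := by
    refine le_trans ?_ hp1
    have hπ4 := Real.pi_le_four
    have hπ := Real.pi_pos
    rw [div_le_div_iff₀ (by norm_num) (by positivity)]
    linarith
  have hfin : ENNReal.ofReal (1/12) ≤ μ Aev := by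
    calc ENNReal.ofReal (1/12) ≤ ENNReal.ofReal p := ENNReal.ofReal_le_ofReal h12
      _ = μ Aev := by rw [hpdef, ENNReal.ofReal_toReal (measure_ne_top μ _)]
  refine le_trans (le_of_eq ?_) hfin
  rw [ENNReal.ofReal_div_of_pos (by norm_num)]
  norm_num
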